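/- arXiv:1102.4123 — 4 statements merged into one kernel-verified Lean document; each statement's English description precedes it below -/
import Mathlib

section
/- For any real number a, the ratio Γ(x+a)/Γ(x) is asymptotic to x^a as x → +∞; that is, lim_{x→∞} Γ(x+a)/(Γ(x)·x^a) = 1. -/
open Real Filter

private def GammaP (a : ℝ) : Prop :=
  Tendsto (fun x : ℝ => Real.Gamma (x + a) / (Real.Gamma x * x ^ a)) atTop (nhds 1)

private lemma tendsto_ratio (a : ℝ) :
    Tendsto (fun x : ℝ => (x + a) / x) atTop (nhds 1) := by
  have h : Tendsto (fun x : ℝ => 1 + a * x⁻¹) atTop (nhds (1 + a * 0)) :=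
    tendsto_const_nhds.add (tendsto_const_nhds.mul tendsto_inv_atTop_zero)
  rw [mul_zero, add_zero] at h
  apply h.congr'
  filter_upwards [eventually_gt_atTop 0] with x hx
  field_simp

private lemma step_up (a : ℝ) (h : GammaP a) : GammaP (a + 1) := by
  have h2 := h.mul (tendsto_ratio a)
  rw [mul_one] at h2
  apply h2.congr'
  filter_upwards [eventually_gt_atTop (max 0 (-a))] with x hx
  have hx0 : 0 < x := lt_of_le_of_lt (le_max_left _ _) hx
  have hxa : 0 < x + a := by
    have := lt_of_le_of_lt (le_max_right _ _) hx; linarith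
  have hG : Real.Gamma (x + (a + 1)) = (x + a) * Real.Gamma (x + a) := by
    rw [show x + (a + 1) = (x + a) + 1 by ring, Real.Gamma_add_one hxa.ne']
  have hpow : x ^ (a + 1) = x ^ a * x := by
    rw [Real.rpow_add hx0, Real.rpow_one]
  rw [hG, hpow]
  have hGx : Real.Gamma x ≠ 0 := (Real.Gamma_pos_of_pos hx0).ne'
  have hxp : (x : ℝ) ^ a ≠ 0 := (Real.rpow_pos_of_pos hx0 a).ne'
  field_simp

private lemma step_down (a : ℝ) (h : GammaP a) : GammaP (a - 1) := by
  have h2 := h.mul ((tendsto_ratio (a - 1)).inv₀ one_ne_zero)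
  rw [inv_one, mul_one] at h2
  apply h2.congr'
  filter_upwards [eventually_gt_atTop (max 0 (-(a - 1)))] with x hx
  have hx0 : 0 < x := lt_of_le_of_lt (le_max_left _ _) hx
  have hxa : 0 < x + (a - 1) := by
    have := lt_of_le_of_lt (le_max_right _ _) hx; linarith
  have hG : Real.Gamma (x + a) = (x + (a - 1)) * Real.Gamma (x + (a - 1)) := by
    rw [show x + a = (x + (a - 1)) + 1 by ring, Real.Gamma_add_one hxa.ne']
  have hpow : x ^ a = x ^ (a - 1) * x := by
    rw [← Real.rpow_add_one hx0.ne' (a - 1), sub_add_cancel]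
  rw [hG, hpow]
  have hGx : Real.Gamma x ≠ 0 := (Real.Gamma_pos_of_pos hx0).ne'
  have hxp : (x : ℝ) ^ (a - 1) ≠ 0 := (Real.rpow_pos_of_pos hx0 _).ne'
  field_simp

private lemma base_case {a : ℝ} (ha0 : 0 ≤ a) (ha1 : a < 1) : GammaP a := by
  have hconv := Real.convexOn_log_Gamma
  -- squeeze between (x/(x+a))^(1-a) and 1
  have hlow : Tendsto (fun x : ℝ => ((x + a) / x) ^ (a - 1)) atTop (nhds 1) := by
    have := (tendsto_ratio a).rpow (tendsto_const_nhds (x := a - 1))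
      (Or.inl one_ne_zero)
    simpa using this
  refine tendsto_of_tendsto_of_tendsto_of_le_of_le' hlow tendsto_const_nhds ?_ ?_
  · -- lower bound
    filter_upwards [eventually_gt_atTop 0] with x hx
    have hxa : 0 < x + a := by linarith
    have hxa1 : 0 < x + a + 1 := by linarith
    have key := hconv.2 (Set.mem_Ioi.mpr hxa) (Set.mem_Ioi.mpr hxa1) ha0
      (by linarith : (0:ℝ) ≤ 1 - a) (by ring)
    have hcomb : a • (x + a) + (1 - a) • (x + a + 1) = x + 1 := by
      simp only [smul_eq_mul]; ring
    rw [hcomb] at key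
    simp only [Function.comp_apply, smul_eq_mul] at key
    have hG1 : Real.Gamma (x + 1) = x * Real.Gamma x := Real.Gamma_add_one hx.ne'
    have hGa1 : Real.Gamma (x + a + 1) = (x + a) * Real.Gamma (x + a) :=
      Real.Gamma_add_one hxa.ne'
    rw [hG1, hGa1, Real.log_mul hx.ne' (Real.Gamma_pos_of_pos hx).ne',
        Real.log_mul hxa.ne' (Real.Gamma_pos_of_pos hxa).ne'] at key
    -- key : log x + log Γ x ≤ a * logΓ(x+a) + (1-a)*(log(x+a) + logΓ(x+a))
    have key2 : Real.log x + Real.log (Real.Gamma x) ≤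
        Real.log (Real.Gamma (x + a)) + (1 - a) * Real.log (x + a) := by nlinarith
    -- exponentiate
    have hGxpos := Real.Gamma_pos_of_pos hx
    have hGapos := Real.Gamma_pos_of_pos hxa
    have h3 : x * Real.Gamma x ≤ Real.Gamma (x + a) * (x + a) ^ (1 - a) := by
      have := Real.exp_le_exp.mpr key2
      rw [Real.exp_add, Real.exp_add, Real.exp_log hx, Real.exp_log hGxpos,
        Real.exp_log hGapos, mul_comm (1 - a), ← Real.rpow_def_of_pos hxa] at this
      exact this
    -- goal: ((x+a)/x)^(a-1) ≤ Γ(x+a)/(Γ x * x^a)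
    rw [Real.div_rpow hxa.le hx.le, div_le_div_iff₀ (by positivity) (by positivity)]
    -- (x+a)^(a-1) * (Γ x * x^a) ≤ Γ(x+a) * x^(a-1)
    have e1 : (x + a) ^ (a - 1) * (x + a) ^ (1 - a) = 1 := by
      rw [← Real.rpow_add hxa]; simp
    have e2 : x ^ (a - 1) * x = x ^ a := by
      rw [← Real.rpow_add_one hx.ne']; ring_nf
    calc (x + a) ^ (a - 1) * (Real.Gamma x * x ^ a)
        = (x + a) ^ (a - 1) * (Real.Gamma x * (x ^ (a - 1) * x)) := by rw [e2]
      _ = ((x + a) ^ (a - 1) * (x * Real.Gamma x)) * x ^ (a - 1) := by ring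
      _ ≤ ((x + a) ^ (a - 1) * (Real.Gamma (x + a) * (x + a) ^ (1 - a))) * x ^ (a - 1) := by
          have hp : (0:ℝ) ≤ (x + a) ^ (a - 1) := (Real.rpow_pos_of_pos hxa _).le
          have hq : (0:ℝ) ≤ x ^ (a - 1) := (Real.rpow_pos_of_pos hx _).le
          exact mul_le_mul_of_nonneg_right (mul_le_mul_of_nonneg_left h3 hp) hq
      _ = Real.Gamma (x + a) * x ^ (a - 1) := by
          rw [show (x + a) ^ (a - 1) * (Real.Gamma (x + a) * (x + a) ^ (1 - a))
            = Real.Gamma (x + a) * ((x + a) ^ (a - 1) * (x + a) ^ (1 - a)) by ring, e1,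
            mul_one]
  · -- upper bound ≤ 1
    filter_upwards [eventually_gt_atTop 0] with x hx
    have hx1 : (0:ℝ) < x + 1 := by linarith
    have hxa : 0 < x + a := by linarith
    have key := hconv.2 (Set.mem_Ioi.mpr hx) (Set.mem_Ioi.mpr hx1)
      (by linarith : (0:ℝ) ≤ 1 - a) ha0 (by ring)
    have hcomb : (1 - a) • x + a • (x + 1) = x + a := by
      simp only [smul_eq_mul]; ring
    rw [hcomb] at key
    simp only [Function.comp_apply, smul_eq_mul] at key
    have hG1 : Real.Gamma (x + 1) = x * Real.Gamma x := Real.Gamma_add_one hx.ne'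
    rw [hG1, Real.log_mul hx.ne' (Real.Gamma_pos_of_pos hx).ne'] at key
    have hGxpos := Real.Gamma_pos_of_pos hx
    have hGapos := Real.Gamma_pos_of_pos hxa
    have key2 : Real.log (Real.Gamma (x + a)) ≤
        Real.log (Real.Gamma x) + a * Real.log x := by nlinarith
    have h3 : Real.Gamma (x + a) ≤ Real.Gamma x * x ^ a := by
      have := Real.exp_le_exp.mpr key2
      rw [Real.exp_add, Real.exp_log hGapos, Real.exp_log hGxpos,
        mul_comm a, ← Real.rpow_def_of_pos hx] at this
      exact this
    rw [div_le_one (by positivity)]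
    exact h3

theorem gamma_ratio_asymptotic (a : ℝ) :
    Filter.Tendsto (fun x : ℝ => Real.Gamma (x + a) / (Real.Gamma x * x ^ a))
      Filter.atTop (nhds 1) := by
  have key : ∀ n : ℤ, GammaP (Int.fract a + n) := by
    intro n
    induction n using Int.induction_on with
    | zero => simpa using base_case (Int.fract_nonneg a) (Int.fract_lt_one a)
    | succ k ih => simpa [add_assoc] using step_up _ ih
    | pred k ih =>
      have := step_down _ ih
      simpa [sub_eq_add_neg, add_assoc] using this
  have := key ⌊a⌋
  rwa [Int.fract_add_floor] at this
end

section
/- Let β > 0, and let m, k be positive integers and a_1, …, a_k real numbers. Define D = ∫_0^π cos(2mt) · |∏_{i=1}^k sin(t + a_i)|^β dt. Then |D| ≤ 6(1 + β)·(k/m)^{min(1, β)}. -/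
open Real intervalIntegral

private lemma abs_prod_sin_le_one {k : ℕ} (a : Fin k → ℝ) (t : ℝ) :
    |∏ i, Real.sin (t + a i)| ≤ 1 := by
  rw [Finset.abs_prod]
  calc ∏ i, |Real.sin (t + a i)| ≤ ∏ _i : Fin k, 1 :=
        Finset.prod_le_prod (fun i _ => abs_nonneg _) (fun i _ => Real.abs_sin_le_one _)
    _ = 1 := by simp

private lemma abs_sin_sub_sin' (x y : ℝ) : |Real.sin x - Real.sin y| ≤ |x - y| := by
  rw [Real.sin_sub_sin, abs_mul, abs_mul]
  have h1 : |Real.sin ((x - y) / 2)| ≤ |(x - y) / 2| := Real.abs_sin_le_abs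
  have h2 : |Real.cos ((x + y) / 2)| ≤ 1 := Real.abs_cos_le_one _
  have : |(2:ℝ)| * |Real.sin ((x - y) / 2)| * |Real.cos ((x + y) / 2)| ≤
      |(2:ℝ)| * |(x - y) / 2| * 1 := by
    gcongr
  calc |(2:ℝ)| * |Real.sin ((x - y) / 2)| * |Real.cos ((x + y) / 2)|
      ≤ |(2:ℝ)| * |(x - y) / 2| * 1 := this
    _ = |x - y| := by rw [abs_two, abs_div, abs_two]; ring

private lemma mul_sub_mul_abs {p q X Y : ℝ} (h1 : |p| ≤ 1) (h2 : |Y| ≤ 1) :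
    |p * X - q * Y| ≤ |X - Y| + |p - q| := by
  have hre : p * X - q * Y = p * (X - Y) + (p - q) * Y := by ring
  rw [hre]
  calc |p * (X - Y) + (p - q) * Y| ≤ |p * (X - Y)| + |(p - q) * Y| := abs_add_le _ _
    _ = |p| * |X - Y| + |p - q| * |Y| := by rw [abs_mul, abs_mul]
    _ ≤ 1 * |X - Y| + |p - q| * 1 := by
        gcongr
    _ = |X - Y| + |p - q| := by ring

private lemma prod_sin_lip : ∀ (k : ℕ) (a : Fin k → ℝ) (s t : ℝ),
    |∏ i, Real.sin (s + a i) - ∏ i, Real.sin (t + a i)| ≤ k * |s - t| := by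
  intro k
  induction k with
  | zero => intro a s t; simp
  | succ n ih =>
    intro a s t
    rw [Fin.prod_univ_succ, Fin.prod_univ_succ]
    have h1 : |Real.sin (s + a 0)| ≤ 1 := Real.abs_sin_le_one _
    have h2 : |∏ i : Fin n, Real.sin (t + a i.succ)| ≤ 1 :=
      abs_prod_sin_le_one (fun i => a i.succ) t
    have h3 : |(∏ i : Fin n, Real.sin (s + a i.succ))
        - ∏ i : Fin n, Real.sin (t + a i.succ)| ≤ n * |s - t| := ih (fun i => a i.succ) s t
    have h4 : |Real.sin (s + a 0) - Real.sin (t + a 0)| ≤ |s - t| := by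
      have := abs_sin_sub_sin' (s + a 0) (t + a 0)
      rwa [show (s + a 0) - (t + a 0) = s - t by ring] at this
    calc |Real.sin (s + a 0) * ∏ i : Fin n, Real.sin (s + a i.succ)
          - Real.sin (t + a 0) * ∏ i : Fin n, Real.sin (t + a i.succ)|
        ≤ |(∏ i : Fin n, Real.sin (s + a i.succ)) - ∏ i : Fin n, Real.sin (t + a i.succ)|
            + |Real.sin (s + a 0) - Real.sin (t + a 0)| := mul_sub_mul_abs h1 h2
      _ ≤ n * |s - t| + |s - t| := add_le_add h3 h4
      _ = ((n + 1 : ℕ) : ℝ) * |s - t| := by push_cast; ring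

private lemma real_rpow_add_le {p a b : ℝ} (ha : 0 ≤ a) (hb : 0 ≤ b) (hp : 0 ≤ p)
    (hp1 : p ≤ 1) : (a + b) ^ p ≤ a ^ p + b ^ p := by
  lift a to NNReal using ha
  lift b to NNReal using hb
  have := NNReal.rpow_add_le_add_rpow a b hp hp1
  exact_mod_cast this

private lemma rpow_holder {β : ℝ} (hβ0 : 0 < β) (hβ1 : β ≤ 1) :
    ∀ {x y : ℝ}, 0 ≤ x → 0 ≤ y → |x ^ β - y ^ β| ≤ |x - y| ^ β := by
  have key : ∀ {x y : ℝ}, 0 ≤ x → 0 ≤ y → y ≤ x → |x ^ β - y ^ β| ≤ |x - y| ^ β := by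
    intro x y hx hy h
    rw [abs_of_nonneg (sub_nonneg.2 (Real.rpow_le_rpow hy h hβ0.le)),
        abs_of_nonneg (sub_nonneg.2 h)]
    have hx' : x = (x - y) + y := by ring
    have : x ^ β ≤ (x - y) ^ β + y ^ β := by
      nth_rewrite 1 [hx']
      exact real_rpow_add_le (by linarith) hy hβ0.le hβ1
    linarith
  intro x y hx hy
  rcases le_total y x with h | h
  · exact key hx hy h
  · rw [abs_sub_comm, abs_sub_comm x y]; exact key hy hx h

private lemma rpow_lip {β : ℝ} (hβ1 : 1 ≤ β) :
    ∀ {x y : ℝ}, x ∈ Set.Icc (0:ℝ) 1 → y ∈ Set.Icc (0:ℝ) 1 →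
      |x ^ β - y ^ β| ≤ β * |x - y| := by
  have hβ0 : 0 < β := lt_of_lt_of_le one_pos hβ1
  have hmono : MonotoneOn (fun z : ℝ => β * z - z ^ β) (Set.Icc 0 1) := by
    have hdiff : ∀ z : ℝ, HasDerivAt (fun z : ℝ => β * z - z ^ β)
        (β * 1 - β * z ^ (β - 1)) z := fun z =>
      ((hasDerivAt_id z).const_mul β).sub (Real.hasDerivAt_rpow_const (Or.inr hβ1))
    apply monotoneOn_of_deriv_nonneg (convex_Icc 0 1)
    · exact (Continuous.continuousOn (by
        have : Continuous fun z : ℝ => z ^ β := by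
          rw [continuous_iff_continuousAt]
          intro z
          exact Real.continuousAt_rpow_const z β (Or.inr hβ0.le)
        exact (continuous_const.mul continuous_id).sub this))
    · intro z _
      exact (hdiff z).differentiableAt.differentiableWithinAt
    · intro z hz
      rw [interior_Icc] at hz
      rw [(hdiff z).deriv]
      have h1 : z ^ (β - 1) ≤ 1 := Real.rpow_le_one hz.1.le hz.2.le (by linarith)
      nlinarith
  have key : ∀ {x y : ℝ}, x ∈ Set.Icc (0:ℝ) 1 → y ∈ Set.Icc (0:ℝ) 1 → y ≤ x →
      |x ^ β - y ^ β| ≤ β * |x - y| := by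
    intro x y hx hy h
    have := hmono hy hx h
    simp only at this
    rw [abs_of_nonneg (sub_nonneg.2 (Real.rpow_le_rpow hy.1 h hβ0.le)),
        abs_of_nonneg (sub_nonneg.2 h)]
    linarith
  intro x y hx hy
  rcases le_total y x with h | h
  · exact key hx hy h
  · rw [abs_sub_comm, abs_sub_comm x y]; exact key hy hx h

theorem stmt2 (β : ℝ) (hβ : 0 < β) (m k : ℕ) (hm : 1 ≤ m) (hk : 1 ≤ k)
    (a : Fin k → ℝ) :
    |∫ t in (0:ℝ)..Real.pi,
        Real.cos (2 * m * t) * |∏ i, Real.sin (t + a i)| ^ β|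
      ≤ 6 * (1 + β) * ((k : ℝ) / m) ^ min 1 β := by
  have hm0 : (0:ℝ) < m := by exact_mod_cast hm
  have hk0 : (0:ℝ) < k := by exact_mod_cast hk
  set h : ℝ := Real.pi / (2 * m) with hh
  have hh0 : 0 < h := by positivity
  set P : ℝ → ℝ := fun t => ∏ i, Real.sin (t + a i) with hP
  set f : ℝ → ℝ := fun t => |P t| ^ β with hf
  set g : ℝ → ℝ := fun t => Real.cos (2 * m * t) * f t with hg
  -- continuity
  have hPc : Continuous P := by
    apply continuous_finset_prod
    intro i _
    exact Real.continuous_sin.comp (continuous_id.add continuous_const)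
  have hfc : Continuous f := by
    rw [continuous_iff_continuousAt]
    intro t
    exact (Real.continuousAt_rpow_const _ β (Or.inr hβ.le)).comp hPc.abs.continuousAt
  have hgc : Continuous g :=
    (Real.continuous_cos.comp (continuous_const.mul continuous_id)).mul hfc
  -- periodicity of g with period π
  have hgper : Function.Periodic g Real.pi := by
    intro t
    have hPval : |P (t + Real.pi)| = |P t| := by
      have : P (t + Real.pi) = ∏ i, -Real.sin (t + a i) := by
        apply Finset.prod_congr rfl
        intro i _
        rw [show t + Real.pi + a i = (t + a i) + Real.pi by ring, Real.sin_add_pi]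
      rw [this, Finset.abs_prod, hP, Finset.abs_prod]
      exact Finset.prod_congr rfl fun i _ => abs_neg _
    have hcos : Real.cos (2 * m * (t + Real.pi)) = Real.cos (2 * m * t) := by
      have : 2 * (m:ℝ) * (t + Real.pi) = 2 * m * t + m * (2 * Real.pi) := by ring
      rw [this, Real.cos_add_nat_mul_two_pi]
    simp only [hg, hf, hPval, hcos]
  -- 2 m h = π
  have h2mh : 2 * (m:ℝ) * h = Real.pi := by
    rw [hh]; field_simp
  -- D and the shift identity
  set D : ℝ := ∫ t in (0:ℝ)..Real.pi, g t with hD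
  have hshift : (∫ t in (0:ℝ)..Real.pi, g (t + h)) = D := by
    rw [intervalIntegral.integral_comp_add_right g h]
    have := hgper.intervalIntegral_add_eq (0 + h) 0
    simp only [zero_add] at this ⊢
    rw [show Real.pi + h = h + Real.pi by ring]
    rw [this]
  have hneg : ∀ t, g (t + h) = -(Real.cos (2 * m * t) * f (t + h)) := by
    intro t
    have : 2 * (m:ℝ) * (t + h) = 2 * m * t + Real.pi := by
      rw [← h2mh]; ring
    simp only [hg, this, Real.cos_add_pi]
    ring
  have hint1 : IntervalIntegrable (fun t => Real.cos (2 * m * t) * f (t + h)) MeasureTheory.volume 0 Real.pi := by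
    apply Continuous.intervalIntegrable
    exact (Real.continuous_cos.comp (continuous_const.mul continuous_id)).mul
      (hfc.comp (continuous_id.add continuous_const))
  have hDneg : (∫ t in (0:ℝ)..Real.pi, Real.cos (2 * m * t) * f (t + h)) = -D := by
    have : (∫ t in (0:ℝ)..Real.pi, g (t + h))
        = ∫ t in (0:ℝ)..Real.pi, -(Real.cos (2 * m * t) * f (t + h)) := by
      apply intervalIntegral.integral_congr
      intro t _
      exact hneg t
    rw [this, intervalIntegral.integral_neg] at hshift
    linarith
  -- pointwise bound on |f t - f (t + h)|
  have habsP : ∀ t, |P t| ∈ Set.Icc (0:ℝ) 1 := fun t =>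
    ⟨abs_nonneg _, abs_prod_sin_le_one a t⟩
  have hPdiff : ∀ t, |(|P t| - |P (t + h)|)| ≤ k * h := by
    intro t
    calc |(|P t| - |P (t + h)|)| ≤ |P t - P (t + h)| := abs_abs_sub_abs_le_abs_sub _ _
      _ ≤ k * |t - (t + h)| := prod_sin_lip k a t (t + h)
      _ = k * h := by rw [show t - (t + h) = -h by ring, abs_neg, abs_of_pos hh0]
  -- choose C by cases
  obtain ⟨C, hC0, hCbound, hCfinal⟩ :
      ∃ C : ℝ, 0 ≤ C ∧ (∀ t, |f t - f (t + h)| ≤ C) ∧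
        Real.pi * C / 2 ≤ 6 * (1 + β) * ((k : ℝ) / m) ^ min 1 β := by
    have hkm : (0:ℝ) < (k:ℝ) / m := by positivity
    have hkh : (k:ℝ) * h = Real.pi / 2 * ((k:ℝ) / m) := by
      rw [hh]; field_simp
    rcases le_total β 1 with hβ1 | hβ1
    · refine ⟨((k:ℝ) * h) ^ β, Real.rpow_nonneg (by positivity) _, ?_, ?_⟩
      · intro t
        calc |f t - f (t + h)| ≤ |(|P t| - |P (t + h)|)| ^ β :=
              rpow_holder hβ hβ1 (abs_nonneg _) (abs_nonneg _)
          _ ≤ ((k:ℝ) * h) ^ β :=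
              Real.rpow_le_rpow (abs_nonneg _) (hPdiff t) hβ.le
      · rw [min_eq_right hβ1, hkh,
          Real.mul_rpow (by positivity) (le_of_lt hkm)]
        have h1 : (Real.pi / 2) ^ β ≤ Real.pi / 2 := by
          calc (Real.pi / 2) ^ β ≤ (Real.pi / 2) ^ (1:ℝ) :=
                Real.rpow_le_rpow_of_exponent_le (by nlinarith [Real.pi_gt_three]) hβ1
            _ = Real.pi / 2 := Real.rpow_one _
        have h2 : (0:ℝ) ≤ ((k:ℝ) / m) ^ β := Real.rpow_nonneg hkm.le _
        have hpi : Real.pi ≤ 4 := Real.pi_le_four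
        have hpi0 : 0 < Real.pi := Real.pi_pos
        have hA : (Real.pi / 2) ^ β * ((k:ℝ) / m) ^ β ≤ 2 * ((k:ℝ) / m) ^ β :=
          mul_le_mul_of_nonneg_right (h1.trans (by linarith)) h2
        have hB : Real.pi * ((Real.pi / 2) ^ β * ((k:ℝ) / m) ^ β)
            ≤ 4 * (2 * ((k:ℝ) / m) ^ β) := by
          apply mul_le_mul hpi hA _ (by norm_num)
          positivity
        have hC : 0 ≤ β * ((k:ℝ) / m) ^ β := by positivity
        linarith
    · refine ⟨β * ((k:ℝ) * h), by positivity, ?_, ?_⟩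
      · intro t
        calc |f t - f (t + h)| ≤ β * |(|P t| - |P (t + h)|)| :=
              rpow_lip hβ1 (habsP t) (habsP (t + h))
          _ ≤ β * ((k:ℝ) * h) := by
              exact mul_le_mul_of_nonneg_left (hPdiff t) hβ.le
      · rw [min_eq_left hβ1, Real.rpow_one, hkh]
        have hpi : Real.pi ≤ 4 := Real.pi_le_four
        have hpi0 : 0 < Real.pi := Real.pi_pos
        have hβq : 0 ≤ β * ((k:ℝ) / m) := by positivity
        have hpis : Real.pi * Real.pi ≤ 16 := by nlinarith
        have hprod := mul_le_mul_of_nonneg_right hpis hβq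
        nlinarith [hkm.le]
  -- combine
  have h2D : 2 * D = ∫ t in (0:ℝ)..Real.pi,
      Real.cos (2 * m * t) * (f t - f (t + h)) := by
    have hint0 : IntervalIntegrable g MeasureTheory.volume 0 Real.pi :=
      hgc.intervalIntegrable _ _
    have : (∫ t in (0:ℝ)..Real.pi, Real.cos (2 * m * t) * (f t - f (t + h)))
        = (∫ t in (0:ℝ)..Real.pi, g t)
          - ∫ t in (0:ℝ)..Real.pi, Real.cos (2 * m * t) * f (t + h) := by
      rw [← intervalIntegral.integral_sub hint0 hint1]
      apply intervalIntegral.integral_congr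
      intro t _
      simp only [hg]
      ring
    rw [this, hDneg, ← hD]
    ring
  have hbound : |2 * D| ≤ C * |Real.pi - 0| := by
    rw [h2D, ← Real.norm_eq_abs]
    apply intervalIntegral.norm_integral_le_of_norm_le_const
    intro t _
    rw [Real.norm_eq_abs, abs_mul]
    calc |Real.cos (2 * m * t)| * |f t - f (t + h)| ≤ 1 * C :=
        mul_le_mul (Real.abs_cos_le_one _) (hCbound t) (abs_nonneg _) one_pos.le
      _ = C := one_mul C
  rw [abs_mul, abs_two, sub_zero, abs_of_pos Real.pi_pos] at hbound
  calc |D| ≤ Real.pi * C / 2 := by linarith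
    _ ≤ 6 * (1 + β) * ((k : ℝ) / m) ^ min 1 β := hCfinal
end

section
/- Let W_n = U_n^T U_n where U_n is an n×n Haar-distributed unitary matrix and n ≥ 2. Then E[|Tr(W_n)|²] = 2n/(n+1). -/
open MeasureTheory Matrix Complex

namespace Stmt13

abbrev UG (n : ℕ) := Matrix.unitaryGroup (Fin n) ℂ

variable {n : ℕ}

lemma cont_entry (i j : Fin n) : Continuous (fun U : UG n => U.1 i j) :=
  continuous_subtype_val.matrix_elem i j

lemma row_norm (U : UG n) (i : Fin n) :
    ∑ k, U.1 i k * (starRingEnd ℂ) (U.1 i k) = 1 := by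
  have h := U.2
  rw [Matrix.mem_unitaryGroup_iff] at h
  have h2 : (U.1 * star U.1) i i = 1 := by rw [h]; simp [Matrix.one_apply]
  simpa [Matrix.mul_apply, Matrix.conjTranspose_apply, Matrix.star_apply] using h2

lemma entry_abs_le (U : UG n) (i j : Fin n) : ‖U.1 i j‖ ≤ 1 := by
  have h := row_norm U i
  have h3 : (‖U.1 i j‖)^2 ≤ 1 := by
    have h1 : ∑ k, Complex.normSq (U.1 i k) = 1 := by
      have := congrArg Complex.re h
      simpa [Complex.mul_conj] using this
    rw [Complex.sq_norm]
    calc Complex.normSq (U.1 i j) ≤ ∑ k, Complex.normSq (U.1 i k) :=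
      Finset.single_le_sum (fun k _ => Complex.normSq_nonneg _) (Finset.mem_univ j)
    _ = 1 := h1
  nlinarith [norm_nonneg (U.1 i j)]

/-- the basic degree-4 monomial -/
def quad (p1 p2 p3 p4 : Fin n × Fin n) (V : UG n) : ℂ :=
  V.1 p1.1 p1.2 * V.1 p2.1 p2.2 * (starRingEnd ℂ) (V.1 p3.1 p3.2)
    * (starRingEnd ℂ) (V.1 p4.1 p4.2)

lemma cont_quad (p1 p2 p3 p4 : Fin n × Fin n) : Continuous (quad p1 p2 p3 p4) := by
  unfold quad
  exact (((cont_entry _ _).mul (cont_entry _ _)).mul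
    (continuous_star.comp (cont_entry _ _))).mul (continuous_star.comp (cont_entry _ _))

lemma abs_quad_le (p1 p2 p3 p4 : Fin n × Fin n) (V : UG n) :
    ‖quad p1 p2 p3 p4 V‖ ≤ 1 := by
  unfold quad
  rw [norm_mul, norm_mul, norm_mul]
  simp only [Complex.norm_conj]
  have h1 := entry_abs_le V p1.1 p1.2
  have h2 := entry_abs_le V p2.1 p2.2
  have h3 := entry_abs_le V p3.1 p3.2
  have h4 := entry_abs_le V p4.1 p4.2
  have n1 := norm_nonneg (V.1 p1.1 p1.2)
  have n2 := norm_nonneg (V.1 p2.1 p2.2)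
  have n3 := norm_nonneg (V.1 p3.1 p3.2)
  have n4 := norm_nonneg (V.1 p4.1 p4.2)
  calc ‖V.1 p1.1 p1.2‖ * ‖V.1 p2.1 p2.2‖
        * ‖V.1 p3.1 p3.2‖ * ‖V.1 p4.1 p4.2‖
      ≤ 1 * 1 * 1 * 1 := by
        gcongr <;> first | assumption | positivity
  _ = 1 := by norm_num

section Meas
variable [MeasurableSpace (UG n)] [BorelSpace (UG n)]
variable (μ : Measure (UG n)) [IsProbabilityMeasure μ]

lemma integrable_cb {g : UG n → ℂ} (hg : Continuous g) {C : ℝ}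
    (hC : ∀ U, ‖g U‖ ≤ C) : Integrable g μ :=
  (integrable_const C).mono' hg.aestronglyMeasurable
    (Filter.Eventually.of_forall fun U => by simpa using hC U)

lemma integrable_quad (p1 p2 p3 p4 : Fin n × Fin n) : Integrable (quad p1 p2 p3 p4) μ :=
  integrable_cb μ (cont_quad p1 p2 p3 p4) (abs_quad_le p1 p2 p3 p4)

omit [IsProbabilityMeasure μ] in
lemma int_comp_right (hright : ∀ U : UG n, Measure.map (fun V => V * U) μ = μ)
    {g : UG n → ℂ} (hg : Continuous g) (D : UG n) :
    ∫ V, g (V * D) ∂μ = ∫ V, g V ∂μ := by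
  have hc : Continuous fun V : UG n => V * D :=
    Continuous.subtype_mk (continuous_subtype_val.matrix_mul continuous_const) _
  conv_rhs => rw [← hright D]
  rw [integral_map hc.aemeasurable (by rw [hright D]; exact hg.aestronglyMeasurable)]

omit [IsProbabilityMeasure μ] in
lemma int_comp_left (hleft : ∀ U : UG n, Measure.map (fun V => U * V) μ = μ)
    {g : UG n → ℂ} (hg : Continuous g) (D : UG n) :
    ∫ V, g (D * V) ∂μ = ∫ V, g V ∂μ := by
  have hc : Continuous fun V : UG n => D * V :=
    Continuous.subtype_mk (continuous_const.matrix_mul continuous_subtype_val) _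
  conv_rhs => rw [← hleft D]
  rw [integral_map hc.aemeasurable (by rw [hleft D]; exact hg.aestronglyMeasurable)]

omit [IsProbabilityMeasure μ] in
lemma vanish_right (hright : ∀ U : UG n, Measure.map (fun V => V * U) μ = μ)
    {g : UG n → ℂ} (hg : Continuous g) (D : UG n) {z : ℂ} (hz : z ≠ 1)
    (h : ∀ V, g (V * D) = z * g V) : ∫ V, g V ∂μ = 0 := by
  have h1 := int_comp_right μ hright hg D
  simp_rw [h, integral_const_mul] at h1
  have h2 : (z - 1) * ∫ V, g V ∂μ = 0 := by rw [sub_mul, one_mul, h1, sub_self]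
  rcases mul_eq_zero.mp h2 with h3 | h3
  · exact absurd (sub_eq_zero.mp h3) hz
  · exact h3

omit [IsProbabilityMeasure μ] in
lemma vanish_left (hleft : ∀ U : UG n, Measure.map (fun V => U * V) μ = μ)
    {g : UG n → ℂ} (hg : Continuous g) (D : UG n) {z : ℂ} (hz : z ≠ 1)
    (h : ∀ V, g (D * V) = z * g V) : ∫ V, g V ∂μ = 0 := by
  have h1 := int_comp_left μ hleft hg D
  simp_rw [h, integral_const_mul] at h1
  have h2 : (z - 1) * ∫ V, g V ∂μ = 0 := by rw [sub_mul, one_mul, h1, sub_self]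
  rcases mul_eq_zero.mp h2 with h3 | h3
  · exact absurd (sub_eq_zero.mp h3) hz
  · exact h3

end Meas

/-- diagonal phase unitary -/
noncomputable def phaseD (i0 : Fin n) : UG n :=
  ⟨Matrix.diagonal (fun k => if k = i0 then Complex.I else 1), by
    rw [Matrix.mem_unitaryGroup_iff', Matrix.star_eq_conjTranspose,
      Matrix.diagonal_conjTranspose, Matrix.diagonal_mul_diagonal]
    convert Matrix.diagonal_one with k
    simp only [Pi.star_apply]
    split_ifs <;> simp [Complex.conj_I]⟩

lemma mul_phaseD_apply (V : UG n) (i0 i j : Fin n) :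
    (V * phaseD i0).1 i j = V.1 i j * (if j = i0 then Complex.I else 1) := by
  have h : (V * phaseD i0).1
      = V.1 * Matrix.diagonal (fun k => if k = i0 then Complex.I else 1) := rfl
  rw [h, Matrix.mul_diagonal]

lemma phaseD_mul_apply (V : UG n) (i0 i j : Fin n) :
    (phaseD i0 * V).1 i j = (if i = i0 then Complex.I else 1) * V.1 i j := by
  have h : (phaseD i0 * V).1
      = Matrix.diagonal (fun k => if k = i0 then Complex.I else 1) * V.1 := rfl
  rw [h, Matrix.diagonal_mul]

/-- permutation unitary -/
noncomputable def permU (σ : Equiv.Perm (Fin n)) : UG n :=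
  ⟨σ.toPEquiv.toMatrix, by
    rw [Matrix.mem_unitaryGroup_iff']
    have hstar : star (σ.toPEquiv.toMatrix : Matrix (Fin n) (Fin n) ℂ)
        = (σ⁻¹).toPEquiv.toMatrix := by
      ext i j
      simp only [Matrix.star_apply, PEquiv.toMatrix_apply, Equiv.toPEquiv_apply, Option.mem_def,
        Option.some.injEq, Matrix.one_apply]
      split_ifs with h1 h2 h2
      · simp
      · exact absurd (by rw [← h1]; simp) h2
      · exact absurd (by rw [← h2]; simp) h1
      · simp
    rw [hstar, PEquiv.toMatrix_toPEquiv_mul]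
    ext i j
    simp [Matrix.submatrix_apply, PEquiv.toMatrix_apply, Equiv.toPEquiv_apply,
      Matrix.one_apply]⟩

lemma permU_left_apply (σ : Equiv.Perm (Fin n)) (V : UG n) (i j : Fin n) :
    (permU σ * V).1 i j = V.1 (σ i) j := by
  have h : (permU σ * V).1 = σ.toPEquiv.toMatrix * V.1 := rfl
  rw [h, PEquiv.toMatrix_toPEquiv_mul]; rfl

lemma permU_right_apply (σ : Equiv.Perm (Fin n)) (V : UG n) (i j : Fin n) :
    (V * permU σ).1 i j = V.1 i (σ⁻¹ j) := by
  have h : (V * permU σ).1 = V.1 * σ.toPEquiv.toMatrix := rfl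
  rw [h, PEquiv.mul_toMatrix_toPEquiv]; rfl

lemma quad_left (σ : Equiv.Perm (Fin n)) (p1 p2 p3 p4 : Fin n × Fin n) (V : UG n) :
    quad p1 p2 p3 p4 (permU σ * V)
      = quad (σ p1.1, p1.2) (σ p2.1, p2.2) (σ p3.1, p3.2) (σ p4.1, p4.2) V := by
  simp [quad, permU_left_apply]

lemma quad_right (σ : Equiv.Perm (Fin n)) (p1 p2 p3 p4 : Fin n × Fin n) (V : UG n) :
    quad p1 p2 p3 p4 (V * permU σ)
      = quad (p1.1, σ⁻¹ p1.2) (p2.1, σ⁻¹ p2.2) (p3.1, σ⁻¹ p3.2) (p4.1, σ⁻¹ p4.2) V := by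
  simp [quad, permU_right_apply]

section Meas2
variable [MeasurableSpace (UG n)] [BorelSpace (UG n)]
variable (μ : Measure (UG n))

lemma int_quad_left (hleft : ∀ U : UG n, Measure.map (fun V => U * V) μ = μ)
    (σ : Equiv.Perm (Fin n)) (p1 p2 p3 p4 : Fin n × Fin n) :
    ∫ V, quad (σ p1.1, p1.2) (σ p2.1, p2.2) (σ p3.1, p3.2) (σ p4.1, p4.2) V ∂μ
      = ∫ V, quad p1 p2 p3 p4 V ∂μ := by
  rw [← int_comp_left μ hleft (cont_quad p1 p2 p3 p4) (permU σ)]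
  simp_rw [quad_left]

lemma int_quad_right (hright : ∀ U : UG n, Measure.map (fun V => V * U) μ = μ)
    (σ : Equiv.Perm (Fin n)) (p1 p2 p3 p4 : Fin n × Fin n) :
    ∫ V, quad (p1.1, σ⁻¹ p1.2) (p2.1, σ⁻¹ p2.2) (p3.1, σ⁻¹ p3.2) (p4.1, σ⁻¹ p4.2) V ∂μ
      = ∫ V, quad p1 p2 p3 p4 V ∂μ := by
  rw [← int_comp_right μ hright (cont_quad p1 p2 p3 p4) (permU σ)]
  simp_rw [quad_right]

end Meas2

lemma exists_perm {α : Type*} [DecidableEq α] (a b c d : α) (hab : a ≠ b) (hcd : c ≠ d) :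
    ∃ σ : Equiv.Perm α, σ a = c ∧ σ b = d := by
  set x := Equiv.swap a c b with hxdef
  have hx : x ≠ c := by
    intro h
    exact hab ((Equiv.swap a c).injective (h.trans (Equiv.swap_apply_left a c).symm)).symm
  refine ⟨(Equiv.swap x d) * (Equiv.swap a c), ?_, ?_⟩
  · simp only [Equiv.Perm.mul_apply, Equiv.swap_apply_left]
    exact Equiv.swap_apply_of_ne_of_ne (Ne.symm hx) hcd
  · simp only [Equiv.Perm.mul_apply, ← hxdef, Equiv.swap_apply_left]



noncomputable def sc : ℂ := ((Real.sqrt 2)⁻¹ : ℝ)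

lemma sc_conj : (starRingEnd ℂ) sc = sc := by simp [sc]

lemma sc_sq : sc * sc = 1/2 := by
  rw [sc, ← Complex.ofReal_mul, ← mul_inv, Real.mul_self_sqrt (by norm_num : (0:ℝ) ≤ 2)]
  norm_num


noncomputable def Emat (i0 i1 : Fin n) : Matrix (Fin n) (Fin n) ℂ :=
  Matrix.diagonal (fun k => if k = i0 ∨ k = i1 then 0 else 1)

noncomputable def Amat (i0 i1 : Fin n) : Matrix (Fin n) (Fin n) ℂ :=
  Matrix.single i0 i0 1 + Matrix.single i0 i1 1 + Matrix.single i1 i0 1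
    - Matrix.single i1 i1 1

noncomputable def Hmat (i0 i1 : Fin n) : Matrix (Fin n) (Fin n) ℂ :=
  Emat i0 i1 + sc • Amat i0 i1

variable {i0 i1 : Fin n} (h01 : i0 ≠ i1)

lemma EE : Emat i0 i1 * Emat i0 i1 = Emat i0 i1 := by
  rw [Emat, Matrix.diagonal_mul_diagonal]
  refine congrArg Matrix.diagonal (funext fun k => ?_)
  split_ifs <;> norm_num

lemma E_std (a b : Fin n) (ha : a = i0 ∨ a = i1) :
    Emat i0 i1 * Matrix.single a b (1:ℂ) = 0 := by
  ext i j
  rw [Emat, Matrix.diagonal_mul]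
  by_cases h : a = i ∧ b = j
  · obtain ⟨rfl, rfl⟩ := h
    rcases ha with rfl | rfl <;> simp
  · simp [Matrix.single, Matrix.of_apply, h]

lemma std_E (a b : Fin n) (hb : b = i0 ∨ b = i1) :
    (Matrix.single a b (1:ℂ)) * Emat i0 i1 = 0 := by
  ext i j
  rw [Emat, Matrix.mul_diagonal]
  by_cases h : a = i ∧ b = j
  · obtain ⟨rfl, rfl⟩ := h
    rcases hb with rfl | rfl <;> simp
  · simp [Matrix.single, Matrix.of_apply, h]

lemma EA : Emat i0 i1 * Amat i0 i1 = 0 := by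
  rw [Amat, mul_sub, mul_add, mul_add]
  rw [E_std i0 i0 (Or.inl rfl), E_std i0 i1 (Or.inl rfl), E_std i1 i0 (Or.inr rfl),
    E_std i1 i1 (Or.inr rfl)]
  simp

lemma AE : Amat i0 i1 * Emat i0 i1 = 0 := by
  rw [Amat, sub_mul, add_mul, add_mul]
  rw [std_E i0 i0 (Or.inl rfl), std_E i0 i1 (Or.inr rfl), std_E i1 i0 (Or.inl rfl),
    std_E i1 i1 (Or.inr rfl)]
  simp

include h01 in
lemma AA : Amat i0 i1 * Amat i0 i1
    = (2:ℂ) • (Matrix.single i0 i0 1 + Matrix.single i1 i1 1) := by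
  rw [Amat]
  simp only [sub_mul, add_mul, mul_sub, mul_add, Matrix.single_mul_single_same,
    Matrix.single_mul_single_of_ne _ _ _ _ h01, Matrix.single_mul_single_of_ne _ _ _ _ h01.symm, mul_one]
  ext i j
  simp only [Matrix.add_apply, Matrix.sub_apply, Matrix.zero_apply, Matrix.smul_apply,
    smul_eq_mul]
  ring

include h01 in
lemma HH : Hmat i0 i1 * Hmat i0 i1 = 1 := by
  have expand : Hmat i0 i1 * Hmat i0 i1
      = Emat i0 i1 * Emat i0 i1 + sc • (Emat i0 i1 * Amat i0 i1)
        + sc • (Amat i0 i1 * Emat i0 i1) + (sc * sc) • (Amat i0 i1 * Amat i0 i1) := by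
    simp only [Hmat, add_mul, mul_add, smul_add, smul_mul_assoc, mul_smul_comm, smul_smul]
    abel
  rw [expand, EE, EA, AE, AA h01]
  simp only [smul_zero, add_zero, smul_smul, sc_sq]
  norm_num
  ext i j
  by_cases h0 : i = i0 <;> by_cases h1 : i = i1 <;>
    by_cases hij : i = j <;>
    simp [Emat, Matrix.diagonal_apply, Matrix.single, Matrix.of_apply,
      Matrix.one_apply, h0, h1, hij, h01] <;> aesop

lemma std_conj (a b : Fin n) :
    (Matrix.single a b (1:ℂ))ᴴ = Matrix.single b a 1 := by
  ext i j
  simp only [Matrix.conjTranspose_apply, Matrix.single, Matrix.of_apply]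
  rw [apply_ite star, star_one, star_zero]
  by_cases h : a = j <;> by_cases h' : b = i <;> simp [h, h', and_comm]

lemma H_star : star (Hmat i0 i1) = Hmat i0 i1 := by
  rw [Hmat, Matrix.star_eq_conjTranspose, Matrix.conjTranspose_add,
    Matrix.conjTranspose_smul]
  congr 1
  · rw [Emat, Matrix.diagonal_conjTranspose]
    refine congrArg Matrix.diagonal (funext fun k => ?_)
    simp only [Pi.star_apply]
    split_ifs <;> simp
  · rw [show (star sc : ℂ) = sc from sc_conj]
    congr 1
    rw [Amat, Matrix.conjTranspose_sub, Matrix.conjTranspose_add,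
      Matrix.conjTranspose_add, std_conj, std_conj, std_conj, std_conj]
    abel

noncomputable def HU (h01 : i0 ≠ i1) : UG n :=
  ⟨Hmat i0 i1, by
    rw [Matrix.mem_unitaryGroup_iff', H_star]
    exact HH h01⟩

include h01 in
lemma mul_HU_c0 (V : UG n) (i : Fin n) :
    (V * HU h01).1 i i0 = sc * (V.1 i i0 + V.1 i i1) := by
  have h : (V * HU h01).1 = V.1 * Hmat i0 i1 := rfl
  rw [h, Hmat, Matrix.mul_add, mul_smul_comm, Matrix.add_apply, Matrix.smul_apply]
  have hE : (V.1 * Emat i0 i1) i i0 = 0 := by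
    rw [Emat, Matrix.mul_diagonal]; simp
  have hA : (V.1 * Amat i0 i1) i i0 = V.1 i i0 + V.1 i i1 := by
    rw [Amat, Matrix.mul_sub, Matrix.mul_add, Matrix.mul_add]
    simp only [Matrix.sub_apply, Matrix.add_apply]
    rw [Matrix.mul_single_apply_same 1 i0 i0 i V.1,
      Matrix.mul_single_apply_of_ne 1 i0 i1 i i0 h01 V.1,
      Matrix.mul_single_apply_same 1 i1 i0 i V.1,
      Matrix.mul_single_apply_of_ne 1 i1 i1 i i0 h01 V.1]
    ring
  rw [hE, hA, smul_eq_mul]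
  ring


end Stmt13

open Stmt13

open MeasureTheory in
theorem stmt13 (n : ℕ) (hn : 2 ≤ n) [MeasurableSpace (Matrix.unitaryGroup (Fin n) ℂ)]
    [BorelSpace (Matrix.unitaryGroup (Fin n) ℂ)]
    (μ : Measure (Matrix.unitaryGroup (Fin n) ℂ)) [IsProbabilityMeasure μ]
    (hleft : ∀ U : Matrix.unitaryGroup (Fin n) ℂ, Measure.map (fun V => U * V) μ = μ)
    (hright : ∀ U : Matrix.unitaryGroup (Fin n) ℂ, Measure.map (fun V => V * U) μ = μ) :
    ∫ U : Matrix.unitaryGroup (Fin n) ℂ,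
        ‖(Matrix.transpose U.1 * U.1).trace‖ ^ 2 ∂μ = 2 * n / (n + 1) := by
  classical
  set i0 : Fin n := ⟨0, by omega⟩ with hi0
  set i1 : Fin n := ⟨1, by omega⟩ with hi1
  have h01 : i0 ≠ i1 := by rw [hi0, hi1]; simp [Fin.ext_iff]
  set a : ℂ := ∫ V, quad (i0,i0) (i0,i0) (i0,i0) (i0,i0) V ∂μ with ha
  set b : ℂ := ∫ V, quad (i0,i0) (i0,i1) (i0,i0) (i0,i1) V ∂μ with hb
  have hneg1 : (-1 : ℂ) ≠ 1 := by norm_num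
  have hIne : (Complex.I : ℂ) ≠ 1 := by
    intro h; simpa [Complex.ext_iff] using h
  have hnegI : (-Complex.I : ℂ) ≠ 1 := by
    intro h; simpa [Complex.ext_iff] using h
  -- all diagonal fourth moments equal a
  have step8 : ∀ i j : Fin n, ∫ V, quad (i,j) (i,j) (i,j) (i,j) V ∂μ = a := by
    intro i j
    have e1 : ∫ V, quad (i,i0) (i,i0) (i,i0) (i,i0) V ∂μ = a := by
      have h := int_quad_left μ hleft (Equiv.swap i0 i) (i0,i0) (i0,i0) (i0,i0) (i0,i0)
      rw [ha]
      simpa only [Equiv.swap_apply_left] using h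
    have e2 : ∫ V, quad (i,j) (i,j) (i,j) (i,j) V ∂μ
        = ∫ V, quad (i,i0) (i,i0) (i,i0) (i,i0) V ∂μ := by
      have h := int_quad_right μ hright (Equiv.swap i0 j)⁻¹ (i,i0) (i,i0) (i,i0) (i,i0)
      simpa only [inv_inv, Equiv.swap_apply_left] using h
    rw [e2, e1]
  -- all strictly off-diagonal |x|^2|y|^2 moments on a row equal b
  have bstep : ∀ j l : Fin n, j ≠ l →
      ∫ V, quad (i0,j) (i0,l) (i0,j) (i0,l) V ∂μ = b := by
    intro j l hjl
    obtain ⟨σ, hσ0, hσ1⟩ := exists_perm i0 i1 j l h01 hjl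
    have h := int_quad_right μ hright σ⁻¹ (i0,i0) (i0,i1) (i0,i0) (i0,i1)
    rw [hb]
    simpa only [inv_inv, hσ0, hσ1] using h
  -- row normalization
  have hsum1 : ∑ j : Fin n, ∑ l : Fin n, ∫ V, quad (i0,j) (i0,l) (i0,j) (i0,l) V ∂μ
      = 1 := by
    have hpt : ∀ V : Matrix.unitaryGroup (Fin n) ℂ,
        ∑ j : Fin n, ∑ l : Fin n, quad (i0,j) (i0,l) (i0,j) (i0,l) V = 1 := by
      intro V
      have hr := row_norm V i0
      calc ∑ j : Fin n, ∑ l : Fin n, quad (i0,j) (i0,l) (i0,j) (i0,l) V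
          = (∑ j : Fin n, V.1 i0 j * (starRingEnd ℂ) (V.1 i0 j))
            * (∑ l : Fin n, V.1 i0 l * (starRingEnd ℂ) (V.1 i0 l)) := by
            rw [Finset.sum_mul_sum]
            exact Finset.sum_congr rfl fun j _ => Finset.sum_congr rfl fun l _ => by
              simp only [quad]; ring
        _ = 1 := by rw [hr, one_mul]
    have h1 : ∀ j : Fin n, ∑ l : Fin n, ∫ V, quad (i0,j) (i0,l) (i0,j) (i0,l) V ∂μ
        = ∫ V, ∑ l : Fin n, quad (i0,j) (i0,l) (i0,j) (i0,l) V ∂μ :=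
      fun j => (integral_finset_sum _ (fun l _ => integrable_quad μ _ _ _ _)).symm
    simp_rw [h1]
    rw [← integral_finset_sum _ (fun j _ => integrable_finset_sum _
      (fun l _ => integrable_quad μ _ _ _ _))]
    simp_rw [hpt]
    simp
  have hcount : (n:ℂ) * (a + ((n:ℂ) - 1) * b) = 1 := by
    have inner : ∀ j : Fin n, ∑ l : Fin n, ∫ V, quad (i0,j) (i0,l) (i0,j) (i0,l) V ∂μ
        = a + ((n:ℂ) - 1) * b := by
      intro j
      rw [← Finset.add_sum_erase Finset.univ _ (Finset.mem_univ j)]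
      congr 1
      · exact step8 i0 j
      · rw [Finset.sum_congr rfl
          (fun l hl => bstep j l (Ne.symm (Finset.ne_of_mem_erase hl)))]
        rw [Finset.sum_const, Finset.card_erase_of_mem (Finset.mem_univ j),
          Finset.card_univ, Fintype.card_fin, nsmul_eq_mul,
          Nat.cast_sub (by omega : 1 ≤ n), Nat.cast_one]
    have := hsum1
    rw [Finset.sum_congr rfl (fun j _ => inner j), Finset.sum_const, Finset.card_univ,
      Fintype.card_fin, nsmul_eq_mul] at this
    exact this
  -- the Hadamard rotation relation : a = 2 b
  have hab : a = 2 * b := by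
    have hq1 : Integrable (quad (i0,i0) (i0,i0) (i0,i0) (i0,i0)) μ := integrable_quad μ _ _ _ _
    have hq2 : Integrable (quad (i0,i1) (i0,i1) (i0,i1) (i0,i1)) μ := integrable_quad μ _ _ _ _
    have hq3 : Integrable (quad (i0,i0) (i0,i1) (i0,i0) (i0,i1)) μ := integrable_quad μ _ _ _ _
    have hq4 : Integrable (quad (i0,i0) (i0,i0) (i0,i0) (i0,i1)) μ := integrable_quad μ _ _ _ _
    have hq5 : Integrable (quad (i0,i0) (i0,i0) (i0,i1) (i0,i1)) μ := integrable_quad μ _ _ _ _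
    have hq6 : Integrable (quad (i0,i0) (i0,i1) (i0,i0) (i0,i0)) μ := integrable_quad μ _ _ _ _
    have hq7 : Integrable (quad (i0,i0) (i0,i1) (i0,i1) (i0,i1)) μ := integrable_quad μ _ _ _ _
    have hq8 : Integrable (quad (i0,i1) (i0,i1) (i0,i0) (i0,i0)) μ := integrable_quad μ _ _ _ _
    have hq9 : Integrable (quad (i0,i1) (i0,i1) (i0,i0) (i0,i1)) μ := integrable_quad μ _ _ _ _
    -- vanishing of grouped phase-odd terms
    have hR1a : ∫ V, (quad (i0,i0) (i0,i0) (i0,i0) (i0,i1) V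
        + quad (i0,i0) (i0,i1) (i0,i1) (i0,i1) V) ∂μ = 0 := by
      refine vanish_right μ hright ((cont_quad _ _ _ _).add (cont_quad _ _ _ _))
        (phaseD i0) hIne (fun V => ?_)
      simp only [quad, mul_phaseD_apply]
      simp only [if_true, if_neg (Ne.symm h01)]
      simp only [_root_.map_mul, Complex.conj_I, mul_one]
      linear_combination (-Complex.I * (V.1 i0 i0 * V.1 i0 i0 * (starRingEnd ℂ) (V.1 i0 i0)
        * (starRingEnd ℂ) (V.1 i0 i1))) * Complex.I_mul_I
    have hR1b : ∫ V, (quad (i0,i0) (i0,i1) (i0,i0) (i0,i0) V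
        + quad (i0,i1) (i0,i1) (i0,i0) (i0,i1) V) ∂μ = 0 := by
      refine vanish_right μ hright ((cont_quad _ _ _ _).add (cont_quad _ _ _ _))
        (phaseD i0) hnegI (fun V => ?_)
      simp only [quad, mul_phaseD_apply]
      simp only [if_true, if_neg (Ne.symm h01)]
      simp only [_root_.map_mul, Complex.conj_I, mul_one]
      linear_combination (Complex.I * (V.1 i0 i0 * V.1 i0 i1 * (starRingEnd ℂ) (V.1 i0 i0)
        * (starRingEnd ℂ) (V.1 i0 i0))) * Complex.I_mul_I
    have hR2 : ∫ V, (quad (i0,i0) (i0,i0) (i0,i1) (i0,i1) V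
        + quad (i0,i1) (i0,i1) (i0,i0) (i0,i0) V) ∂μ = 0 := by
      refine vanish_right μ hright ((cont_quad _ _ _ _).add (cont_quad _ _ _ _))
        (phaseD i0) hneg1 (fun V => ?_)
      simp only [quad, mul_phaseD_apply]
      simp only [if_true, if_neg (Ne.symm h01)]
      simp only [_root_.map_mul, Complex.conj_I, mul_one]
      linear_combination (V.1 i0 i0 * V.1 i0 i0 * (starRingEnd ℂ) (V.1 i0 i1)
        * (starRingEnd ℂ) (V.1 i0 i1) + V.1 i0 i1 * V.1 i0 i1 * (starRingEnd ℂ) (V.1 i0 i0)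
        * (starRingEnd ℂ) (V.1 i0 i0)) * Complex.I_mul_I
    have hcomp : ∫ V, quad (i0,i0) (i0,i0) (i0,i0) (i0,i0) (V * HU h01) ∂μ = a := by
      rw [int_comp_right μ hright (cont_quad _ _ _ _) (HU h01), ← ha]
    have hpt : ∀ V : Matrix.unitaryGroup (Fin n) ℂ,
        quad (i0,i0) (i0,i0) (i0,i0) (i0,i0) (V * HU h01)
        = (1/4 : ℂ) * (quad (i0,i0) (i0,i0) (i0,i0) (i0,i0) V
            + quad (i0,i1) (i0,i1) (i0,i1) (i0,i1) V
            + 4 * quad (i0,i0) (i0,i1) (i0,i0) (i0,i1) V)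
          + (1/2 : ℂ) * (quad (i0,i0) (i0,i0) (i0,i0) (i0,i1) V
            + quad (i0,i0) (i0,i1) (i0,i1) (i0,i1) V)
          + (1/2 : ℂ) * (quad (i0,i0) (i0,i1) (i0,i0) (i0,i0) V
            + quad (i0,i1) (i0,i1) (i0,i0) (i0,i1) V)
          + (1/4 : ℂ) * (quad (i0,i0) (i0,i0) (i0,i1) (i0,i1) V
            + quad (i0,i1) (i0,i1) (i0,i0) (i0,i0) V) := by
      intro V
      simp only [quad, mul_HU_c0 h01, _root_.map_mul, map_add, sc_conj]
      linear_combination (((V.1 i0 i0 + V.1 i0 i1) * (V.1 i0 i0 + V.1 i0 i1)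
        * ((starRingEnd ℂ) (V.1 i0 i0) + (starRingEnd ℂ) (V.1 i0 i1))
        * ((starRingEnd ℂ) (V.1 i0 i0) + (starRingEnd ℂ) (V.1 i0 i1)))
        * (sc * sc + 1/2)) * sc_sq
    rw [integral_congr_ae (Filter.Eventually.of_forall hpt)] at hcomp
    have IG : Integrable (fun V => (1/4 : ℂ) * (quad (i0,i0) (i0,i0) (i0,i0) (i0,i0) V
        + quad (i0,i1) (i0,i1) (i0,i1) (i0,i1) V
        + 4 * quad (i0,i0) (i0,i1) (i0,i0) (i0,i1) V)) μ :=
      (((hq1.add hq2).add (hq3.const_mul 4)).const_mul _)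
    have I47 : Integrable (fun V => (1/2 : ℂ) * (quad (i0,i0) (i0,i0) (i0,i0) (i0,i1) V
        + quad (i0,i0) (i0,i1) (i0,i1) (i0,i1) V)) μ := ((hq4.add hq7).const_mul _)
    have I69 : Integrable (fun V => (1/2 : ℂ) * (quad (i0,i0) (i0,i1) (i0,i0) (i0,i0) V
        + quad (i0,i1) (i0,i1) (i0,i0) (i0,i1) V)) μ := ((hq6.add hq9).const_mul _)
    have I58 : Integrable (fun V => (1/4 : ℂ) * (quad (i0,i0) (i0,i0) (i0,i1) (i0,i1) V
        + quad (i0,i1) (i0,i1) (i0,i0) (i0,i0) V)) μ := ((hq5.add hq8).const_mul _)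
    have IGa : Integrable (fun V => (1/4 : ℂ) * (quad (i0,i0) (i0,i0) (i0,i0) (i0,i0) V
        + quad (i0,i1) (i0,i1) (i0,i1) (i0,i1) V
        + 4 * quad (i0,i0) (i0,i1) (i0,i0) (i0,i1) V)
        + (1/2 : ℂ) * (quad (i0,i0) (i0,i0) (i0,i0) (i0,i1) V
        + quad (i0,i0) (i0,i1) (i0,i1) (i0,i1) V)) μ := IG.add I47
    have IGb : Integrable (fun V => (1/4 : ℂ) * (quad (i0,i0) (i0,i0) (i0,i0) (i0,i0) V
        + quad (i0,i1) (i0,i1) (i0,i1) (i0,i1) V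
        + 4 * quad (i0,i0) (i0,i1) (i0,i0) (i0,i1) V)
        + (1/2 : ℂ) * (quad (i0,i0) (i0,i0) (i0,i0) (i0,i1) V
        + quad (i0,i0) (i0,i1) (i0,i1) (i0,i1) V)
        + (1/2 : ℂ) * (quad (i0,i0) (i0,i1) (i0,i0) (i0,i0) V
        + quad (i0,i1) (i0,i1) (i0,i0) (i0,i1) V)) μ := IGa.add I69
    rw [integral_add IGb I58, integral_add IGa I69, integral_add IG I47] at hcomp
    rw [integral_const_mul, integral_const_mul, integral_const_mul, integral_const_mul,
      hR1a, hR1b, hR2] at hcomp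
    have Iq12 : Integrable (fun V => quad (i0,i0) (i0,i0) (i0,i0) (i0,i0) V
        + quad (i0,i1) (i0,i1) (i0,i1) (i0,i1) V) μ := hq1.add hq2
    have Iq3' : Integrable (fun V => (4:ℂ) * quad (i0,i0) (i0,i1) (i0,i0) (i0,i1) V) μ :=
      hq3.const_mul 4
    rw [integral_add Iq12 Iq3', integral_add hq1 hq2, integral_const_mul] at hcomp
    rw [← ha, ← hb, step8 i0 i1] at hcomp
    linear_combination 2 * hcomp.symm
  -- vanishing of strictly off-diagonal trace terms
  have hvan : ∀ p q : Fin n × Fin n, q ≠ p → ∫ V, quad p p q q V ∂μ = 0 := by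
    intro p q hpq
    rcases eq_or_ne p.1 q.1 with h1 | h1
    · have h2 : p.2 ≠ q.2 := by
        intro h
        exact hpq (Prod.ext h1.symm h.symm)
      refine vanish_right μ hright (cont_quad _ _ _ _) (phaseD p.2) hneg1 (fun V => ?_)
      simp only [quad, mul_phaseD_apply]
      simp only [if_true, if_neg (Ne.symm h2)]
      simp only [_root_.map_mul, Complex.conj_I, mul_one]
      linear_combination (V.1 p.1 p.2 * V.1 p.1 p.2 * (starRingEnd ℂ) (V.1 q.1 q.2)
        * (starRingEnd ℂ) (V.1 q.1 q.2)) * Complex.I_mul_I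
    · refine vanish_left μ hleft (cont_quad _ _ _ _) (phaseD p.1) hneg1 (fun V => ?_)
      simp only [quad, phaseD_mul_apply]
      simp only [if_true, if_neg (Ne.symm h1)]
      simp only [_root_.map_mul, Complex.conj_I, mul_one, one_mul]
      linear_combination (V.1 p.1 p.2 * V.1 p.1 p.2 * (starRingEnd ℂ) (V.1 q.1 q.2)
        * (starRingEnd ℂ) (V.1 q.1 q.2)) * Complex.I_mul_I
  -- the trace expansion
  have htr : ∀ V : Matrix.unitaryGroup (Fin n) ℂ,
      (Matrix.transpose V.1 * V.1).trace = ∑ p : Fin n × Fin n, (V.1 p.1 p.2)^2 := by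
    intro V
    rw [Matrix.trace]
    simp only [Matrix.diag_apply, Matrix.mul_apply, Matrix.transpose_apply]
    rw [Fintype.sum_prod_type, Finset.sum_comm]
    simp [sq]
  have hquad : ∀ V : Matrix.unitaryGroup (Fin n) ℂ,
      ((Matrix.transpose V.1 * V.1).trace)
        * (starRingEnd ℂ) ((Matrix.transpose V.1 * V.1).trace)
      = ∑ p : Fin n × Fin n, ∑ q : Fin n × Fin n, quad p p q q V := by
    intro V
    rw [htr V, map_sum, Finset.sum_mul_sum]
    refine Finset.sum_congr rfl fun p _ => Finset.sum_congr rfl fun q _ => ?_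
    simp only [quad, map_pow]
    ring
  have hp' : ∀ p : Fin n × Fin n, ∫ V, ∑ q : Fin n × Fin n, quad p p q q V ∂μ = a := by
    intro p
    rw [integral_finset_sum _ (fun q _ => integrable_quad μ _ _ _ _)]
    rw [Finset.sum_eq_single p (fun q _ hq => hvan p q hq) (by simp)]
    exact step8 p.1 p.2
  have hmain : ∫ V, ((Matrix.transpose V.1 * V.1).trace)
      * (starRingEnd ℂ) ((Matrix.transpose V.1 * V.1).trace) ∂μ
      = (n:ℂ) * (n:ℂ) * a := by
    rw [integral_congr_ae (Filter.Eventually.of_forall hquad)]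
    rw [integral_finset_sum _ (fun p _ => integrable_finset_sum _
      (fun q _ => integrable_quad μ _ _ _ _))]
    rw [Finset.sum_congr rfl (fun p _ => hp' p), Finset.sum_const, Finset.card_univ]
    simp only [Fintype.card_prod, Fintype.card_fin, nsmul_eq_mul]
    push_cast
    ring
  -- final algebra
  have hn1 : ((n:ℂ) + 1) ≠ 0 := by
    have h : ((n:ℂ) + 1) = ((n+1 : ℕ) : ℂ) := by push_cast; ring
    rw [h]
    exact Nat.cast_ne_zero.mpr (by omega)
  have hval : (n:ℂ) * (n:ℂ) * a = 2 * (n:ℂ) / ((n:ℂ) + 1) := by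
    have hb' : (n:ℂ) * ((n:ℂ) + 1) * b = 1 := by
      linear_combination hcount - (n:ℂ) * hab
    rw [eq_div_iff hn1]
    linear_combination (2*(n:ℂ)) * hb' + ((n:ℂ)*(n:ℂ)*((n:ℂ)+1)) * hab
  have habs2 : ∀ V : Matrix.unitaryGroup (Fin n) ℂ,
      ((‖(Matrix.transpose V.1 * V.1).trace‖ ^ 2 : ℝ) : ℂ)
      = ((Matrix.transpose V.1 * V.1).trace)
        * (starRingEnd ℂ) ((Matrix.transpose V.1 * V.1).trace) := by
    intro V
    rw [Complex.mul_conj]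
    norm_cast
    exact Complex.sq_norm _
  have hfin : ((∫ U : Matrix.unitaryGroup (Fin n) ℂ,
      ‖(Matrix.transpose U.1 * U.1).trace‖ ^ 2 ∂μ : ℝ) : ℂ)
      = 2 * (n:ℂ) / ((n:ℂ) + 1) := by
    have h0 : ∫ U : Matrix.unitaryGroup (Fin n) ℂ,
        ((‖(Matrix.transpose U.1 * U.1).trace‖ ^ 2 : ℝ) : ℂ) ∂μ
        = ((∫ U : Matrix.unitaryGroup (Fin n) ℂ,
            ‖(Matrix.transpose U.1 * U.1).trace‖ ^ 2 ∂μ : ℝ) : ℂ) :=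
      integral_ofReal
    rw [← h0, integral_congr_ae (Filter.Eventually.of_forall habs2), hmain, hval]
  rw [show ((2:ℂ) * (n:ℂ) / ((n:ℂ) + 1)) = (((2 * (n:ℕ) / ((n:ℕ) + 1) : ℝ)) : ℂ) from by
    push_cast; ring] at hfin
  exact_mod_cast hfin
end

section
/- Let α > 0 be real, K ≥ 1 an integer, and n ≥ K an integer. For every partition λ of K with length ℓ(λ) ≤ n, define N_λ^α(n) = ∏_{(i,j)∈λ} (n + (j−1)α − (i−1)) / (n + jα − i), the product over cells (i,j) of the Young diagram of λ. Then A ≤ N_λ^α(n) ≤ B, where A = (1 − |α−1|/(n−K+α))^K if α ≥ 1 and A = 1 if α < 1, and B = (1 + |α−1|/(n−K+α))^K if α < 1 and B = 1 if α ≥ 1. -/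
lemma aux14 (L : ℕ) (lam : Fin L → ℕ) (f : Fin L → ℕ → ℝ) (a b : ℝ)
    (ha : 0 ≤ a) (hb : 0 ≤ b)
    (h : ∀ i j, j < lam i → a ≤ f i j ∧ f i j ≤ b) :
    a ^ (∑ i, lam i) ≤ (∏ i : Fin L, ∏ j ∈ Finset.range (lam i), f i j) ∧
      (∏ i : Fin L, ∏ j ∈ Finset.range (lam i), f i j) ≤ b ^ (∑ i, lam i) := by
  constructor
  · rw [← Finset.prod_pow_eq_pow_sum]
    apply Finset.prod_le_prod
    · intro i _; positivity
    · intro i _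
      have : a ^ lam i = ∏ _j ∈ Finset.range (lam i), a := by
        simp [Finset.prod_const]
      rw [this]
      exact Finset.prod_le_prod (fun j _ => ha) (fun j hj =>
        (h i j (Finset.mem_range.mp hj)).1)
  · rw [← Finset.prod_pow_eq_pow_sum]
    apply Finset.prod_le_prod
    · intro i _
      exact Finset.prod_nonneg fun j hj =>
        le_trans ha (h i j (Finset.mem_range.mp hj)).1
    · intro i _
      have : b ^ lam i = ∏ _j ∈ Finset.range (lam i), b := by
        simp [Finset.prod_const]
      rw [this]
      exact Finset.prod_le_prod
        (fun j hj => le_trans ha (h i j (Finset.mem_range.mp hj)).1)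
        (fun j hj => (h i j (Finset.mem_range.mp hj)).2)

theorem stmt14 (α : ℝ) (hα : 0 < α) (K n L : ℕ) (hK : 1 ≤ K) (hKn : K ≤ n)
    (lam : Fin L → ℕ) (hpos : ∀ i, 0 < lam i) (hanti : Antitone lam)
    (hsum : ∑ i, lam i = K) (hlen : L ≤ n) :
    (if 1 ≤ α then (1 - |α - 1| / ((n : ℝ) - K + α)) ^ K else 1)
        ≤ (∏ i : Fin L, ∏ j ∈ Finset.range (lam i),
            ((n : ℝ) + j * α - i) / ((n : ℝ) + (j + 1) * α - (i + 1)))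
      ∧ (∏ i : Fin L, ∏ j ∈ Finset.range (lam i),
            ((n : ℝ) + j * α - i) / ((n : ℝ) + (j + 1) * α - (i + 1)))
        ≤ (if α < 1 then (1 + |α - 1| / ((n : ℝ) - K + α)) ^ K else 1) := by
  have hLK : L ≤ K := by
    calc L = ∑ _i : Fin L, 1 := by simp
    _ ≤ ∑ i, lam i := Finset.sum_le_sum fun i _ => hpos i
    _ = K := hsum
  have hKnR : (K : ℝ) ≤ (n : ℝ) := Nat.cast_le.2 hKn
  have hP : (0:ℝ) < (n : ℝ) - K + α := by linarith
  -- denominator bound for each cell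
  have hD : ∀ (i : Fin L) (j : ℕ), j < lam i →
      (n : ℝ) - K + α ≤ (n : ℝ) + ((j : ℝ) + 1) * α - ((i : ℝ) + 1) := by
    intro i j _
    have hiK : ((i : ℕ) : ℝ) + 1 ≤ (K : ℝ) := by
      have h1 : (i : ℕ) + 1 ≤ L := i.2
      have h2 : (i : ℕ) + 1 ≤ K := le_trans h1 hLK
      exact_mod_cast h2
    have hj0 : (0:ℝ) ≤ (j : ℝ) := Nat.cast_nonneg j
    nlinarith [mul_nonneg hj0 hα.le]
  have key : ∀ a b : ℝ, 0 ≤ a → 0 ≤ b →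
      (∀ (i : Fin L) (j : ℕ), j < lam i →
        a ≤ ((n : ℝ) + j * α - i) / ((n : ℝ) + (j + 1) * α - (i + 1)) ∧
        ((n : ℝ) + j * α - i) / ((n : ℝ) + (j + 1) * α - (i + 1)) ≤ b) →
      a ^ K ≤ (∏ i : Fin L, ∏ j ∈ Finset.range (lam i),
            ((n : ℝ) + j * α - i) / ((n : ℝ) + (j + 1) * α - (i + 1))) ∧
      (∏ i : Fin L, ∏ j ∈ Finset.range (lam i),
            ((n : ℝ) + j * α - i) / ((n : ℝ) + (j + 1) * α - (i + 1))) ≤ b ^ K := by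
    intro a b ha hb h
    have := aux14 L lam
      (fun i j => ((n : ℝ) + j * α - i) / ((n : ℝ) + (j + 1) * α - (i + 1)))
      a b ha hb h
    rwa [hsum] at this
  rcases le_or_gt 1 α with h1 | h1
  · rw [if_pos h1, if_neg (not_lt.2 h1)]
    have habs : |α - 1| = α - 1 := abs_of_nonneg (by linarith)
    rw [habs]
    have hcell : ∀ (i : Fin L) (j : ℕ), j < lam i →
        (1 - (α - 1) / ((n : ℝ) - K + α)) ≤
          ((n : ℝ) + j * α - i) / ((n : ℝ) + (j + 1) * α - (i + 1)) ∧
        ((n : ℝ) + j * α - i) / ((n : ℝ) + (j + 1) * α - (i + 1)) ≤ 1 := by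
      intro i j hj
      have hDP := hD i j hj
      have hD0 : (0:ℝ) < (n : ℝ) + ((j : ℝ) + 1) * α - ((i : ℝ) + 1) :=
        lt_of_lt_of_le hP hDP
      have hgeq : ((n : ℝ) + j * α - i) / ((n : ℝ) + (j + 1) * α - (i + 1))
          = 1 - (α - 1) / ((n : ℝ) + ((j : ℝ) + 1) * α - ((i : ℝ) + 1)) := by
        rw [div_eq_iff hD0.ne', sub_mul, div_mul_cancel₀ _ hD0.ne']
        ring
      constructor
      · rw [hgeq]
        have := div_le_div_of_nonneg_left (by linarith : (0:ℝ) ≤ α - 1) hP hDP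
        linarith
      · rw [div_le_one hD0]; linarith
    have hkey := key (1 - (α - 1) / ((n : ℝ) - K + α)) 1
      (by rw [sub_nonneg, div_le_one hP]; linarith) (by norm_num) hcell
    exact ⟨hkey.1, by simpa using hkey.2⟩
  · rw [if_neg (not_le.2 h1), if_pos h1]
    have habs : |α - 1| = 1 - α := by
      rw [abs_of_nonpos (by linarith)]; ring
    rw [habs]
    have hcell : ∀ (i : Fin L) (j : ℕ), j < lam i →
        (1:ℝ) ≤ ((n : ℝ) + j * α - i) / ((n : ℝ) + (j + 1) * α - (i + 1)) ∧
        ((n : ℝ) + j * α - i) / ((n : ℝ) + (j + 1) * α - (i + 1)) ≤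
          1 + (1 - α) / ((n : ℝ) - K + α) := by
      intro i j hj
      have hDP := hD i j hj
      have hD0 : (0:ℝ) < (n : ℝ) + ((j : ℝ) + 1) * α - ((i : ℝ) + 1) :=
        lt_of_lt_of_le hP hDP
      have hgeq : ((n : ℝ) + j * α - i) / ((n : ℝ) + (j + 1) * α - (i + 1))
          = 1 + (1 - α) / ((n : ℝ) + ((j : ℝ) + 1) * α - ((i : ℝ) + 1)) := by
        rw [div_eq_iff hD0.ne', add_mul, div_mul_cancel₀ _ hD0.ne']
        ring
      constructor
      · rw [hgeq]
        have : (0:ℝ) ≤ (1 - α) / ((n : ℝ) + ((j : ℝ) + 1) * α - ((i : ℝ) + 1)) :=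
          div_nonneg (by linarith) hD0.le
        linarith
      · rw [hgeq]
        have := div_le_div_of_nonneg_left (by linarith : (0:ℝ) ≤ 1 - α) hP hDP
        linarith
    have hkey := key 1 (1 + (1 - α) / ((n : ℝ) - K + α))
      (by norm_num) (by have h0 := div_nonneg (by linarith : (0:ℝ) ≤ 1 - α) hP.le; linarith) hcell
    exact ⟨by simpa using hkey.1, hkey.2⟩
end
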